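/- For r > 0 and any continuous function f : [0, b] → ℝ, the left Riemann-Liouville fractional derivative of order r is a left inverse of the left Riemann-Liouville fractional integral of order r: D_0^r (I_0^r f)(x) = f(x) for all x ∈ (0, b). -/

import Mathlib

open MeasureTheory intervalIntegral

/-- Left Riemann-Liouville fractional integral of order `r` with lower limit `0`. -/
noncomputable def RLint (r : ℝ) (f : ℝ → ℝ) : ℝ → ℝ :=
  fun x => (1 / Real.Gamma r) * ∫ y in (0:ℝ)..x, (x - y) ^ (r - 1) * f y

/-- Left Riemann-Liouville fractional derivative of order `r` with lower limit `0`. -/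
noncomputable def RLderiv (r : ℝ) (f : ℝ → ℝ) : ℝ → ℝ :=
  fun x =>
    iteratedDeriv (⌊r⌋₊ + 1)
      (fun t => (1 / Real.Gamma ((⌊r⌋₊ + 1 : ℕ) - r)) *
        ∫ y in (0:ℝ)..t, (t - y) ^ (((⌊r⌋₊ + 1 : ℕ) : ℝ) - r - 1) * f y) x

open Set Filter Topology

/-- Real Beta integral. -/
noncomputable def rBeta (a c : ℝ) : ℝ := ∫ s in (0:ℝ)..1, s ^ (a-1) * (1-s) ^ (c-1)

lemma rBeta_integrable {a c : ℝ} (ha : 0 < a) (hc : 0 < c) :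
    IntervalIntegrable (fun s : ℝ => s ^ (a-1) * (1-s) ^ (c-1)) volume 0 1 := by
  have h := Complex.betaIntegral_convergent (u := (a:ℂ)) (v := (c:ℂ)) (by simpa) (by simpa)
  have h2 : IntervalIntegrable (fun s : ℝ =>
      ((s:ℂ) ^ ((a:ℂ)-1) * (1-(s:ℂ)) ^ ((c:ℂ)-1)).re) volume 0 1 := by
    rw [intervalIntegrable_iff] at h ⊢
    exact h.re
  refine h2.congr_ae ?_
  rw [Filter.EventuallyEq, ae_restrict_iff' measurableSet_uIoc]
  filter_upwards with s hs
  rw [uIoc_of_le zero_le_one] at hs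
  have hs0 : (0:ℝ) ≤ s := hs.1.le
  have hs1 : (0:ℝ) ≤ 1 - s := by linarith [hs.2]
  have e1 : ((a:ℂ) - 1) = ((a-1 : ℝ):ℂ) := by push_cast; ring
  have e2 : ((c:ℂ) - 1) = ((c-1 : ℝ):ℂ) := by push_cast; ring
  have e3 : (1 - (s:ℂ)) = ((1 - s : ℝ):ℂ) := by push_cast; ring
  rw [e1, e2, e3, ← Complex.ofReal_cpow hs0, ← Complex.ofReal_cpow hs1,
    ← Complex.ofReal_mul, Complex.ofReal_re]

lemma rBeta_gamma {a c : ℝ} (ha : 0 < a) (hc : 0 < c) :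
    Real.Gamma a * Real.Gamma c = Real.Gamma (a + c) * rBeta a c := by
  have h := Complex.Gamma_mul_Gamma_eq_betaIntegral (s := (a:ℂ)) (t := (c:ℂ))
    (by simpa) (by simpa)
  have hβ : Complex.betaIntegral a c = (rBeta a c : ℂ) := by
    rw [Complex.betaIntegral, rBeta, ← intervalIntegral.integral_ofReal]
    refine intervalIntegral.integral_congr fun s hs => ?_
    rw [uIcc_of_le zero_le_one] at hs
    have e1 : ((a:ℂ) - 1) = ((a-1 : ℝ):ℂ) := by push_cast; ring
    have e2 : ((c:ℂ) - 1) = ((c-1 : ℝ):ℂ) := by push_cast; ring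
    have e3 : (1 - (s:ℂ)) = ((1 - s : ℝ):ℂ) := by push_cast; ring
    rw [e1, e2, e3, ← Complex.ofReal_cpow hs.1,
      ← Complex.ofReal_cpow (by linarith [hs.2] : (0:ℝ) ≤ 1 - s), ← Complex.ofReal_mul]
  rw [hβ, ← Complex.ofReal_add, Complex.Gamma_ofReal, Complex.Gamma_ofReal,
    Complex.Gamma_ofReal, ← Complex.ofReal_mul, ← Complex.ofReal_mul] at h
  exact_mod_cast h

section
variable {a c z t : ℝ} (ha : 0 < a) (hc : 0 < c) (hzt : z < t)
include ha hc hzt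

private lemma phi_eq : ∀ s ∈ Icc (0:ℝ) 1,
    (t - ((t-z) * s + z)) ^ (a-1) * (((t-z) * s + z) - z) ^ (c-1)
      = ((t-z) ^ (a+c-2)) * ((1-s) ^ (a-1) * s ^ (c-1)) := by
  intro s hs
  have h1 : t - ((t-z) * s + z) = (t-z) * (1-s) := by ring
  have h2 : ((t-z) * s + z) - z = (t-z) * s := by ring
  have htz : (0:ℝ) ≤ t - z := by linarith
  rw [h1, h2, Real.mul_rpow htz (by linarith [hs.2]), Real.mul_rpow htz hs.1,
    show a+c-2 = (a-1)+(c-1) from by ring,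
    Real.rpow_add (by linarith : (0:ℝ) < t - z)]
  ring

lemma kernel2_intervalIntegrable :
    IntervalIntegrable (fun y => (t-y)^(a-1) * (y-z)^(c-1)) volume z t := by
  have hβ : IntervalIntegrable (fun s : ℝ => s ^ (c-1) * (1-s) ^ (a-1)) volume 0 1 :=
    rBeta_integrable hc ha
  have hh : IntervalIntegrable
      (fun s : ℝ => (t - ((t-z) * s + z)) ^ (a-1) * (((t-z) * s + z) - z) ^ (c-1))
      volume 0 1 := by
    refine ((hβ.const_mul ((t-z) ^ (a+c-2))).congr_ae ?_)
    rw [Filter.EventuallyEq, ae_restrict_iff' measurableSet_uIoc]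
    filter_upwards with s hs
    rw [uIoc_of_le zero_le_one] at hs
    rw [phi_eq ha hc hzt s ⟨hs.1.le, hs.2⟩]
    ring
  have htz : t - z ≠ 0 := by intro h; linarith
  have h1 := hh.comp_sub_right (z/(t-z))
  have h2 := h1.comp_mul_right (c := 1/(t-z))
  have e0 : (0 + z/(t-z)) / (1/(t-z)) = z := by field_simp; ring
  have e1 : (1 + z/(t-z)) / (1/(t-z)) = t := by field_simp; ring
  rw [e0, e1] at h2
  have hfun : (fun y:ℝ => (t - ((t-z) * (y * (1/(t-z)) - z/(t-z)) + z)) ^ (a-1) *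
      ((t-z) * (y * (1/(t-z)) - z/(t-z)) + z - z) ^ (c-1))
      = fun y => (t-y)^(a-1) * (y-z)^(c-1) := by
    funext y
    have hy : (t-z) * (y * (1/(t-z)) - z/(t-z)) + z = y := by field_simp; ring
    rw [hy]
  rwa [hfun] at h2

lemma kernel2_integral :
    ∫ y in z..t, (t-y)^(a-1) * (y-z)^(c-1) = (t-z)^(a+c-1) * rBeta c a := by
  have hcomp := intervalIntegral.integral_comp_mul_add
    (f := fun y => (t-y)^(a-1) * (y-z)^(c-1)) (a := 0) (b := 1)
    (c := t - z) (hc := by intro h; linarith) (d := z)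
  simp only [mul_zero, zero_add, mul_one] at hcomp
  have e1 : t - z + z = t := by ring
  rw [e1] at hcomp
  have key : (∫ s in (0:ℝ)..1, (t - ((t-z) * s + z)) ^ (a-1) * (((t-z) * s + z) - z) ^ (c-1))
      = (t-z) ^ (a+c-2) * ∫ s in (0:ℝ)..1, s ^ (c-1) * (1-s) ^ (a-1) := by
    rw [← intervalIntegral.integral_const_mul]
    refine intervalIntegral.integral_congr fun s hs => ?_
    rw [uIcc_of_le zero_le_one] at hs
    rw [phi_eq ha hc hzt s hs]; ring
  rw [key] at hcomp
  have htz : (0:ℝ) < t - z := by linarith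
  calc ∫ y in z..t, (t-y)^(a-1) * (y-z)^(c-1)
      = (t-z) • ((t-z)⁻¹ • ∫ y in z..t, (t-y)^(a-1) * (y-z)^(c-1)) := by
        rw [smul_smul, mul_inv_cancel₀ (ne_of_gt htz), one_smul]
    _ = (t-z) • ((t-z) ^ (a+c-2) * ∫ s in (0:ℝ)..1, s ^ (c-1) * (1-s) ^ (a-1)) := by
        rw [← hcomp]
    _ = (t-z)^(a+c-1) * rBeta c a := by
        rw [rBeta, smul_eq_mul, ← mul_assoc]
        congr 1
        · rw [show a+c-1 = 1+(a+c-2) from by ring, Real.rpow_add htz, Real.rpow_one]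

end

lemma ioo_int (g : ℝ → ℝ) {p q : ℝ} (h : p ≤ q) :
    ∫ x in Ioo p q, g x = ∫ x in p..q, g x := by
  rw [intervalIntegral.integral_of_le h, integral_Ioc_eq_integral_Ioo]

section
variable {b : ℝ} {f : ℝ → ℝ}

lemma key_fubini (hf : ContinuousOn f (Icc 0 b)) {a c t : ℝ}
    (ha : 0 < a) (hc : 0 < c) (ht0 : 0 < t) (htb : t ≤ b) :
    ∫ y in (0:ℝ)..t, (t-y)^(a-1) * ∫ z in (0:ℝ)..y, (y-z)^(c-1) * f z
      = ∫ z in (0:ℝ)..t, ((t-z)^(a+c-1) * rBeta c a) * f z := by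
  obtain ⟨M, hM⟩ := isCompact_Icc.exists_bound_of_continuousOn hf
  set G : ℝ × ℝ → ℝ :=
    fun p => if p.2 < p.1 then (t-p.1)^(a-1) * ((p.1-p.2)^(c-1) * f p.2) else 0 with hG
  have hsub : Ioo (0:ℝ) t ⊆ Icc 0 b := fun w hw => ⟨hw.1.le, hw.2.le.trans htb⟩
  have hfm : AEStronglyMeasurable f (volume.restrict (Ioo (0:ℝ) t)) :=
    (hf.mono hsub).aestronglyMeasurable measurableSet_Ioo
  -- measurability of G
  have hker : Measurable (fun p : ℝ × ℝ => (t - p.1)^(a-1) * (p.1 - p.2)^(c-1)) := by fun_prop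
  have hH : AEStronglyMeasurable
      (fun p : ℝ × ℝ => (t-p.1)^(a-1) * ((p.1-p.2)^(c-1) * f p.2)) ((volume.restrict (Ioo (0:ℝ) t)).prod (volume.restrict (Ioo (0:ℝ) t))) := by
    have h0 := (hker.aestronglyMeasurable (μ := (volume.restrict (Ioo (0:ℝ) t)).prod (volume.restrict (Ioo (0:ℝ) t)))).mul hfm.comp_snd
    exact h0.congr (Filter.Eventually.of_forall fun p => by simp [Pi.mul_apply, mul_assoc])
  have hGind : G = Set.indicator {p : ℝ × ℝ | p.2 < p.1}
      (fun p => (t-p.1)^(a-1) * ((p.1-p.2)^(c-1) * f p.2)) := by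
    funext p; simp only [hG, Set.indicator_apply, mem_setOf_eq]
  have hGsm : AEStronglyMeasurable G ((volume.restrict (Ioo (0:ℝ) t)).prod (volume.restrict (Ioo (0:ℝ) t))) := by
    rw [hGind]
    exact hH.indicator (measurableSet_lt measurable_snd measurable_fst)
  -- basic set identities
  have hIzt : ∀ z ∈ Ioo (0:ℝ) t, Ioi z ∩ Ioo 0 t = Ioo z t := by
    intro z hz; ext w
    simp only [mem_inter_iff, mem_Ioi, mem_Ioo]
    exact ⟨fun h => ⟨h.1, h.2.2⟩, fun h => ⟨h.1, hz.1.trans h.1, h.2⟩⟩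
  have hIy : ∀ y ∈ Ioo (0:ℝ) t, Iio y ∩ Ioo 0 t = Ioo 0 y := by
    intro y hy; ext w
    simp only [mem_inter_iff, mem_Iio, mem_Ioo]
    exact ⟨fun h => ⟨h.2.1, h.1⟩, fun h => ⟨h.2, h.1, h.2.trans hy.2⟩⟩
  -- kernel integrability on sections
  have hkint : ∀ z ∈ Ioo (0:ℝ) t,
      IntegrableOn (fun y => (t-y)^(a-1) * (y-z)^(c-1)) (Ioo z t) volume := by
    intro z hz
    exact (kernel2_intervalIntegrable ha hc hz.2).1.mono_set Ioo_subset_Ioc_self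
  -- value of the norm-integral in y for fixed z
  have hval : ∀ z ∈ Ioo (0:ℝ) t,
      (∫ y, ‖G (y, z)‖ ∂(volume.restrict (Ioo (0:ℝ) t))) = ((t-z)^(a+c-1) * rBeta c a) * |f z| := by
    intro z hz
    have h1 : (fun y => ‖G (y, z)‖)
        = Set.indicator (Ioi z) (fun y => ‖(t-y)^(a-1) * ((y-z)^(c-1) * f z)‖) := by
      funext y; simp only [hG, Set.indicator_apply, mem_Ioi]
      split <;> simp
    rw [h1, MeasureTheory.integral_indicator measurableSet_Ioi,
      Measure.restrict_restrict measurableSet_Ioi, hIzt z hz]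
    have h2 : EqOn (fun y => ‖(t-y)^(a-1) * ((y-z)^(c-1) * f z)‖)
        (fun y => ((t-y)^(a-1) * (y-z)^(c-1)) * |f z|) (Ioo z t) := by
      intro y hy
      simp only [Real.norm_eq_abs, abs_mul,
        abs_of_nonneg (Real.rpow_nonneg (by linarith [hy.2] : (0:ℝ) ≤ t - y) _),
        abs_of_nonneg (Real.rpow_nonneg (by linarith [hy.1] : (0:ℝ) ≤ y - z) _)]
      ring
    rw [setIntegral_congr_fun measurableSet_Ioo h2,
      ioo_int _ hz.2.le, intervalIntegral.integral_mul_const,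
      kernel2_integral ha hc hz.2]
  -- integrability of G on the product
  have hprod : Integrable G ((volume.restrict (Ioo (0:ℝ) t)).prod (volume.restrict (Ioo (0:ℝ) t))) := by
    rw [integrable_prod_iff' hGsm]
    constructor
    · rw [ae_restrict_iff' measurableSet_Ioo]
      filter_upwards with z hz
      have hsec : (fun y => G (y, z))
          = Set.indicator (Ioi z) (fun y => (t-y)^(a-1) * ((y-z)^(c-1) * f z)) := by
        funext y; simp only [hG, Set.indicator_apply, mem_Ioi]
      rw [hsec, integrable_indicator_iff measurableSet_Ioi, IntegrableOn,
        Measure.restrict_restrict measurableSet_Ioi, hIzt z hz]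
      have := (hkint z hz).mul_const (f z)
      simpa [Pi.mul_apply, mul_assoc] using this
    · -- integrability of z ↦ ∫ y ‖G (y,z)‖
      have hker1 : IntegrableOn (fun z => (t-z)^(a+c-1) * rBeta c a) (Ioo 0 t) volume := by
        have h0 : IntervalIntegrable (fun x : ℝ => x ^ (a+c-1)) volume 0 t :=
          intervalIntegral.intervalIntegrable_rpow' (by linarith)
        have h1 := (h0.comp_sub_left t).symm
        simp only [sub_zero, sub_self] at h1
        exact (h1.1.mono_set Ioo_subset_Ioc_self).mul_const _
      have habs : Integrable (fun z => |f z| * ((t-z)^(a+c-1) * rBeta c a)) (volume.restrict (Ioo (0:ℝ) t)) := by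
        refine Integrable.bdd_mul (c := M) hker1 ?_ ?_
        · exact hfm.norm
        · rw [ae_restrict_iff' measurableSet_Ioo]
          filter_upwards with z hz
          simpa using hM z (hsub hz)
      refine (habs.congr ?_)
      rw [Filter.EventuallyEq, ae_restrict_iff' measurableSet_Ioo]
      filter_upwards with z hz
      rw [hval z hz]; ring
  -- Fubini
  have hswap := MeasureTheory.integral_integral_swap (μ := volume.restrict (Ioo (0:ℝ) t)) (ν := volume.restrict (Ioo (0:ℝ) t))
    (f := fun y z => G (y, z)) (by exact hprod)
  -- identify LHS
  have hL : ∫ y, (∫ z, G (y, z) ∂(volume.restrict (Ioo (0:ℝ) t))) ∂(volume.restrict (Ioo (0:ℝ) t))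
      = ∫ y in (0:ℝ)..t, (t-y)^(a-1) * ∫ z in (0:ℝ)..y, (y-z)^(c-1) * f z := by
    rw [← ioo_int _ ht0.le]
    refine setIntegral_congr_fun measurableSet_Ioo fun y hy => ?_
    have hsec : (fun z => G (y, z))
        = Set.indicator (Iio y) (fun z => (t-y)^(a-1) * ((y-z)^(c-1) * f z)) := by
      funext z; simp only [hG, Set.indicator_apply, mem_Iio]
    rw [hsec, MeasureTheory.integral_indicator measurableSet_Iio,
      Measure.restrict_restrict measurableSet_Iio, hIy y hy,
      ioo_int _ hy.1.le, intervalIntegral.integral_const_mul]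
  -- identify RHS
  have hR : ∫ z, (∫ y, G (y, z) ∂(volume.restrict (Ioo (0:ℝ) t))) ∂(volume.restrict (Ioo (0:ℝ) t))
      = ∫ z in (0:ℝ)..t, ((t-z)^(a+c-1) * rBeta c a) * f z := by
    rw [← ioo_int _ ht0.le]
    refine setIntegral_congr_fun measurableSet_Ioo fun z hz => ?_
    have hsec : (fun y => G (y, z))
        = Set.indicator (Ioi z) (fun y => (t-y)^(a-1) * ((y-z)^(c-1) * f z)) := by
      funext y; simp only [hG, Set.indicator_apply, mem_Ioi]
    rw [hsec, MeasureTheory.integral_indicator measurableSet_Ioi,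
      Measure.restrict_restrict measurableSet_Ioi, hIzt z hz,
      ioo_int _ hz.2.le]
    have h3 : EqOn (fun y => (t-y)^(a-1) * ((y-z)^(c-1) * f z))
        (fun y => ((t-y)^(a-1) * (y-z)^(c-1)) * f z) (uIcc z t) := by
      intro y _; simp [mul_assoc]
    rw [intervalIntegral.integral_congr h3, intervalIntegral.integral_mul_const,
      kernel2_integral ha hc hz.2]
  rw [← hL, ← hR]
  exact hswap

end

section
variable {b : ℝ} {f : ℝ → ℝ}

lemma semigroup_norm (hf : ContinuousOn f (Icc 0 b)) {a c t : ℝ}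
    (ha : 0 < a) (hc : 0 < c) (ht0 : 0 ≤ t) (htb : t ≤ b) :
    (1/Real.Gamma a) * ∫ y in (0:ℝ)..t, (t-y)^(a-1) *
        ((1/Real.Gamma c) * ∫ z in (0:ℝ)..y, (y-z)^(c-1) * f z)
      = (1/Real.Gamma (a+c)) * ∫ z in (0:ℝ)..t, (t-z)^(a+c-1) * f z := by
  rcases eq_or_lt_of_le ht0 with h | h
  · simp [← h]
  · have h1 : ∫ y in (0:ℝ)..t, (t-y)^(a-1) *
          ((1/Real.Gamma c) * ∫ z in (0:ℝ)..y, (y-z)^(c-1) * f z)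
        = (1/Real.Gamma c) * ∫ y in (0:ℝ)..t, (t-y)^(a-1) *
            ∫ z in (0:ℝ)..y, (y-z)^(c-1) * f z := by
      rw [← intervalIntegral.integral_const_mul]
      exact intervalIntegral.integral_congr fun y _ => by ring
    rw [h1, key_fubini hf ha hc h htb]
    have hΓa := Real.Gamma_pos_of_pos ha
    have hΓc := Real.Gamma_pos_of_pos hc
    have hΓac := Real.Gamma_pos_of_pos (by linarith : (0:ℝ) < a + c)
    have hBeta : Real.Gamma c * Real.Gamma a = Real.Gamma (a + c) * rBeta c a := by
      have := rBeta_gamma hc ha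
      rwa [show c + a = a + c from by ring] at this
    have hB : rBeta c a = Real.Gamma c * Real.Gamma a / Real.Gamma (a+c) := by
      rw [eq_div_iff hΓac.ne']
      linear_combination -hBeta
    rw [← intervalIntegral.integral_const_mul, ← intervalIntegral.integral_const_mul,
      ← intervalIntegral.integral_const_mul]
    refine intervalIntegral.integral_congr fun z _ => ?_
    rw [hB]
    field_simp

noncomputable def Jfun (f : ℝ → ℝ) : ℕ → ℝ → ℝ
  | 0 => f
  | (k+1) => fun t => ∫ s in (0:ℝ)..t, Jfun f k s

lemma Jcont (hb : 0 ≤ b) (hf : ContinuousOn f (Icc 0 b)) :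
    ∀ k, ContinuousOn (Jfun f k) (Icc 0 b) := by
  intro k
  induction k with
  | zero => exact hf
  | succ k ih =>
    have hint : IntegrableOn (Jfun f k) (uIcc 0 b) volume := by
      rw [uIcc_of_le hb]
      exact ih.integrableOn_Icc
    have h2 := intervalIntegral.continuousOn_primitive_interval (μ := volume)
      (a := 0) (b := b) hint
    rw [uIcc_of_le hb] at h2
    simpa [Jfun] using h2

lemma Jderiv (hb : 0 < b) (hf : ContinuousOn f (Icc 0 b)) :
    ∀ k, ∀ x ∈ Ioo (0:ℝ) b, iteratedDeriv k (Jfun f k) x = f x := by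
  intro k
  induction k with
  | zero => intro x _; simp [Jfun]
  | succ k ih =>
    intro x hx
    rw [iteratedDeriv_succ']
    have hcontk : ContinuousOn (Jfun f k) (Icc 0 b) := Jcont hb.le hf k
    have hev : deriv (Jfun f (k+1)) =ᶠ[𝓝 x] Jfun f k := by
      filter_upwards [isOpen_Ioo.mem_nhds hx] with y hy
      have hintk : IntervalIntegrable (Jfun f k) volume 0 y := by
        refine (hcontk.mono ?_).intervalIntegrable
        rw [uIcc_of_le hy.1.le]
        exact Icc_subset_Icc le_rfl hy.2.le
      have hmeas : StronglyMeasurableAtFilter (Jfun f k) (𝓝 y) volume :=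
        ContinuousOn.stronglyMeasurableAtFilter isOpen_Ioo
          (hcontk.mono Ioo_subset_Icc_self) y hy
      have hca : ContinuousAt (Jfun f k) y :=
        hcontk.continuousAt (Icc_mem_nhds hy.1 (lt_of_lt_of_le hy.2 le_rfl))
      have hd : HasDerivAt (Jfun f (k+1)) (Jfun f k y) y := by
        have := intervalIntegral.integral_hasDerivAt_right hintk hmeas hca
        simpa [Jfun] using this
      exact hd.deriv
    rw [Filter.EventuallyEq.iteratedDeriv_eq k hev]
    exact ih x hx

lemma J_eq (hf : ContinuousOn f (Icc 0 b)) :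
    ∀ k : ℕ, ∀ t ∈ Icc (0:ℝ) b,
      (1/Real.Gamma ((k:ℝ)+1)) * ∫ z in (0:ℝ)..t, (t-z)^(((k:ℝ)+1)-1) * f z
        = Jfun f (k+1) t := by
  intro k
  induction k with
  | zero =>
    intro t ht
    norm_num [Jfun, Real.Gamma_one]
  | succ k ih =>
    intro t ht
    have hsg := semigroup_norm hf (a := 1) (c := (k:ℝ)+1) one_pos
      (by positivity) ht.1 ht.2
    have hL : ∫ y in (0:ℝ)..t, (t-y)^((1:ℝ)-1) *
          ((1/Real.Gamma ((k:ℝ)+1)) * ∫ z in (0:ℝ)..y, (y-z)^(((k:ℝ)+1)-1) * f z)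
        = ∫ y in (0:ℝ)..t, Jfun f (k+1) y := by
      refine intervalIntegral.integral_congr fun y hy => ?_
      rw [uIcc_of_le ht.1] at hy
      have hyb : y ∈ Icc (0:ℝ) b := ⟨hy.1, hy.2.trans ht.2⟩
      simp only [sub_self, Real.rpow_zero, one_mul]
      exact ih y hyb
    rw [hL, Real.Gamma_one] at hsg
    norm_num at hsg
    rw [show Jfun f (k+1+1) t = ∫ y in (0:ℝ)..t, Jfun f (k+1) y from rfl, hsg]
    push_cast
    rw [show (1:ℝ) + ((k:ℝ)+1) = (k:ℝ)+1+1 from by ring, one_div]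
    congr 1
    refine intervalIntegral.integral_congr fun z _ => ?_
    norm_num

/-- The left Riemann-Liouville fractional derivative of order `r` is a left inverse
of the fractional integral of order `r` on continuous functions. -/
theorem stmt18 (r b : ℝ) (hr : 0 < r) (hb : 0 < b) (f : ℝ → ℝ)
    (hf : ContinuousOn f (Set.Icc 0 b)) :
    ∀ x ∈ Set.Ioo (0 : ℝ) b, RLderiv r (RLint r f) x = f x := by
  intro x hx
  set n : ℕ := ⌊r⌋₊ + 1 with hn
  have hrn : r < (n:ℝ) := by
    rw [hn]; push_cast; exact Nat.lt_floor_add_one r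
  have ha : 0 < (n:ℝ) - r := by linarith
  have hinner : ∀ t ∈ Icc (0:ℝ) b,
      (1 / Real.Gamma ((n:ℝ) - r)) *
          ∫ y in (0:ℝ)..t, (t - y) ^ ((n:ℝ) - r - 1) * RLint r f y
        = Jfun f n t := by
    intro t ht
    have hsg := semigroup_norm hf (a := (n:ℝ) - r) (c := r) ha hr ht.1 ht.2
    have he : (n:ℝ) - r + r = ((⌊r⌋₊:ℝ) + 1) := by rw [hn]; push_cast; ring
    rw [he] at hsg
    have hL : ∫ y in (0:ℝ)..t, (t-y)^((n:ℝ)-r-1) *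
          ((1/Real.Gamma r) * ∫ z in (0:ℝ)..y, (y-z)^(r-1) * f z)
        = ∫ y in (0:ℝ)..t, (t - y) ^ ((n:ℝ) - r - 1) * RLint r f y := by
      refine intervalIntegral.integral_congr fun y _ => ?_
      simp [RLint]
    rw [hL] at hsg
    rw [hsg]
    have := J_eq hf ⌊r⌋₊ t ht
    rw [← this]
  have hev : (fun t => (1 / Real.Gamma (((⌊r⌋₊ + 1 : ℕ):ℝ) - r)) *
      ∫ y in (0:ℝ)..t, (t - y) ^ (((⌊r⌋₊ + 1 : ℕ) : ℝ) - r - 1) * RLint r f y)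
        =ᶠ[𝓝 x] Jfun f n := by
    filter_upwards [isOpen_Ioo.mem_nhds hx] with y hy
    have := hinner y ⟨hy.1.le, hy.2.le⟩
    simpa [hn] using this
  show iteratedDeriv (⌊r⌋₊ + 1) _ x = f x
  rw [Filter.EventuallyEq.iteratedDeriv_eq (⌊r⌋₊ + 1) hev]
  exact Jderiv hb hf n x hx

end
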